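/- Let K ⊆ ℝⁿ be the closed unit disk Dⁿ. There exists a continuous map χ : Dⁿ × Dⁿ → Homeo(ℝⁿ) (with Homeo(ℝⁿ) topologized by the compact-open topology) such that: (i) for each (x,y) ∈ Dⁿ × Dⁿ, the homeomorphism χ(x,y) has compact support and satisfies χ(x,y)(x) = y; and (ii) for each x ∈ Dⁿ, χ(x,x) = id. -/
import Mathlib

open Metric Set

namespace Statement2Aux

variable {n : ℕ}

noncomputable def ψ (z : EuclideanSpace ℝ (Fin n)) : ℝ :=
  max 0 (min 1 ((5 - ‖z‖) / 4))

lemma ψ_nonneg (z : EuclideanSpace ℝ (Fin n)) : 0 ≤ ψ z := le_max_left _ _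

lemma ψ_le_one (z : EuclideanSpace ℝ (Fin n)) : ψ z ≤ 1 :=
  max_le (by norm_num) (min_le_left _ _)

lemma ψ_eq_one {z : EuclideanSpace ℝ (Fin n)} (h : ‖z‖ ≤ 1) : ψ z = 1 := by
  have h1 : (1 : ℝ) ≤ (5 - ‖z‖) / 4 := by linarith
  simp [ψ, min_eq_left h1]

lemma ψ_eq_zero {z : EuclideanSpace ℝ (Fin n)} (h : 5 ≤ ‖z‖) : ψ z = 0 := by
  have h1 : (5 - ‖z‖) / 4 ≤ 0 := by linarith
  have h2 : min 1 ((5 - ‖z‖) / 4) ≤ 0 := le_trans (min_le_right _ _) h1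
  simp [ψ, max_eq_left h2]

lemma lipψ : LipschitzWith (1/4 : NNReal) (ψ (n := n)) := by
  have h1 : LipschitzWith (1/4 : NNReal) (fun z : EuclideanSpace ℝ (Fin n) => (5 - ‖z‖) / 4) := by
    apply LipschitzWith.of_dist_le_mul
    intro z w
    rw [Real.dist_eq, dist_eq_norm]
    have h := abs_norm_sub_norm_le w z
    rw [norm_sub_rev w z] at h
    have e : (5 - ‖z‖) / 4 - (5 - ‖w‖) / 4 = (‖w‖ - ‖z‖) / 4 := by ring
    have c4 : |(4:ℝ)| = 4 := by norm_num
    rw [e, abs_div, c4]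
    push_cast
    linarith
  exact (h1.const_min 1).const_max 0

lemma abs_ψ_sub (z w : EuclideanSpace ℝ (Fin n)) : |ψ z - ψ w| ≤ ‖z - w‖ / 4 := by
  have h := lipψ.dist_le_mul z w
  rw [Real.dist_eq, dist_eq_norm] at h
  push_cast at h
  linarith

noncomputable def f (c z : EuclideanSpace ℝ (Fin n)) : EuclideanSpace ℝ (Fin n) :=
  z + ψ z • c

lemma approx {c : EuclideanSpace ℝ (Fin n)} (hc : ‖c‖ ≤ 2) :
    ApproximatesLinearOn (f c)
      ((ContinuousLinearEquiv.refl ℝ (EuclideanSpace ℝ (Fin n)) :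
        EuclideanSpace ℝ (Fin n) ≃L[ℝ] EuclideanSpace ℝ (Fin n)) :
        EuclideanSpace ℝ (Fin n) →L[ℝ] EuclideanSpace ℝ (Fin n))
      univ (1/2) := by
  intro x _ y _
  have e : f c x - f c y -
      ((ContinuousLinearEquiv.refl ℝ (EuclideanSpace ℝ (Fin n)) :
        EuclideanSpace ℝ (Fin n) →L[ℝ] EuclideanSpace ℝ (Fin n)) (x - y))
      = (ψ x - ψ y) • c := by
    simp only [f, ContinuousLinearEquiv.coe_coe, ContinuousLinearEquiv.coe_refl,
      ContinuousLinearMap.id_apply, ContinuousLinearEquiv.refl_apply, id_eq, sub_smul]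
    abel
  rw [e, norm_smul, Real.norm_eq_abs]
  have h1 := abs_ψ_sub x y
  have h2 : |ψ x - ψ y| * ‖c‖ ≤ (‖x - y‖ / 4) * 2 := by
    apply mul_le_mul h1 hc (norm_nonneg _)
    positivity
  push_cast
  linarith

lemma hcond :
    Subsingleton (EuclideanSpace ℝ (Fin n)) ∨ (1/2 : NNReal) <
      ‖(((ContinuousLinearEquiv.refl ℝ (EuclideanSpace ℝ (Fin n))).symm :
        EuclideanSpace ℝ (Fin n) ≃L[ℝ] EuclideanSpace ℝ (Fin n)) :
        EuclideanSpace ℝ (Fin n) →L[ℝ] EuclideanSpace ℝ (Fin n))‖₊⁻¹ := by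
  rcases subsingleton_or_nontrivial (EuclideanSpace ℝ (Fin n)) with h | h
  · exact Or.inl h
  · right
    rw [ContinuousLinearEquiv.refl_symm]
    rw [show (((ContinuousLinearEquiv.refl ℝ (EuclideanSpace ℝ (Fin n))) :
        EuclideanSpace ℝ (Fin n) ≃L[ℝ] EuclideanSpace ℝ (Fin n)) :
        EuclideanSpace ℝ (Fin n) →L[ℝ] EuclideanSpace ℝ (Fin n)) =
        ContinuousLinearMap.id ℝ _ from rfl]
    rw [ContinuousLinearMap.nnnorm_id]
    rw [← NNReal.coe_lt_coe]
    norm_num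

noncomputable def H {c : EuclideanSpace ℝ (Fin n)} (hc : ‖c‖ ≤ 2) :
    EuclideanSpace ℝ (Fin n) ≃ₜ EuclideanSpace ℝ (Fin n) :=
  ApproximatesLinearOn.toHomeomorph (f c) (approx hc) hcond

lemma H_apply {c : EuclideanSpace ℝ (Fin n)} (hc : ‖c‖ ≤ 2) (z : EuclideanSpace ℝ (Fin n)) :
    H hc z = z + ψ z • c := rfl

lemma antilip {c : EuclideanSpace ℝ (Fin n)} (hc : ‖c‖ ≤ 2) (z w : EuclideanSpace ℝ (Fin n)) :
    ‖z - w‖ ≤ 2 * ‖f c z - f c w‖ := by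
  have h := approx hc z (mem_univ _) w (mem_univ _)
  simp only [ContinuousLinearEquiv.coe_coe, ContinuousLinearEquiv.coe_refl,
    ContinuousLinearMap.id_apply, ContinuousLinearEquiv.refl_apply, id_eq] at h
  push_cast at h
  have h2 : ‖z - w‖ - ‖f c z - f c w‖ ≤ ‖(z - w) - (f c z - f c w)‖ := by
    have := norm_sub_norm_le (z - w) (f c z - f c w)
    linarith
  rw [show (z - w) - (f c z - f c w) = -(f c z - f c w - (z - w)) by abel, norm_neg] at h2
  linarith

end Statement2Aux

open Statement2Aux in
theorem statement2 (n : ℕ) :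
    ∃ χ : (closedBall (0 : EuclideanSpace ℝ (Fin n)) 1) ×
          (closedBall (0 : EuclideanSpace ℝ (Fin n)) 1) →
          (EuclideanSpace ℝ (Fin n) ≃ₜ EuclideanSpace ℝ (Fin n)),
      Continuous (fun p => (ContinuousMap.mk (χ p) (χ p).continuous :
        C(EuclideanSpace ℝ (Fin n), EuclideanSpace ℝ (Fin n)))) ∧
      Continuous (fun p => (ContinuousMap.mk ((χ p).symm) (χ p).symm.continuous :
        C(EuclideanSpace ℝ (Fin n), EuclideanSpace ℝ (Fin n)))) ∧
      (∀ p, ∃ K : Set (EuclideanSpace ℝ (Fin n)), IsCompact K ∧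
        ∀ z ∉ K, χ p z = z) ∧
      (∀ p, χ p (p.1 : EuclideanSpace ℝ (Fin n)) = (p.2 : EuclideanSpace ℝ (Fin n))) ∧
      (∀ x, χ (x, x) = Homeomorph.refl _) := by
  set E := EuclideanSpace ℝ (Fin n)
  have hbound : ∀ p : (closedBall (0 : E) 1) × (closedBall (0 : E) 1),
      ‖(p.2 : E) - (p.1 : E)‖ ≤ 2 := by
    intro p
    have h1 : ‖(p.1 : E)‖ ≤ 1 := by
      have := p.1.2; rwa [mem_closedBall, dist_zero_right] at this
    have h2 : ‖(p.2 : E)‖ ≤ 1 := by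
      have := p.2.2; rwa [mem_closedBall, dist_zero_right] at this
    calc ‖(p.2 : E) - (p.1 : E)‖ ≤ ‖(p.2 : E)‖ + ‖(p.1 : E)‖ := norm_sub_le _ _
      _ ≤ 2 := by linarith
  refine ⟨fun p => H (hbound p), ?_, ?_, ?_, ?_, ?_⟩
  · -- forward continuity
    apply ContinuousMap.continuous_of_continuous_uncurry
    have : Continuous (fun q : ((closedBall (0 : E) 1) × (closedBall (0 : E) 1)) × E =>
        q.2 + ψ q.2 • ((q.1.2 : E) - (q.1.1 : E))) := by
      exact continuous_snd.add ((lipψ.continuous.comp continuous_snd).smul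
        ((continuous_subtype_val.comp (continuous_snd.comp continuous_fst)).sub
          (continuous_subtype_val.comp (continuous_fst.comp continuous_fst))))
    exact this
  · -- inverse continuity
    apply ContinuousMap.continuous_of_continuous_uncurry
    have lip : LipschitzWith 6 (fun q : ((closedBall (0 : E) 1) × (closedBall (0 : E) 1)) × E =>
        (H (hbound q.1)).symm q.2) := by
      apply LipschitzWith.of_dist_le_mul
      rintro ⟨p, z⟩ ⟨q, w⟩
      set a := (H (hbound p)).symm z with ha
      set b := (H (hbound q)).symm w with hb
      have hfa : f ((p.2 : E) - (p.1 : E)) a = z := by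
        have := (H (hbound p)).apply_symm_apply z
        exact this
      have hfb : f ((q.2 : E) - (q.1 : E)) b = w := by
        exact (H (hbound q)).apply_symm_apply w
      have key : ‖a - b‖ ≤ 2 * ‖f ((p.2 : E) - (p.1 : E)) a - f ((p.2 : E) - (p.1 : E)) b‖ :=
        antilip (hbound p) a b
      have e : f ((p.2 : E) - (p.1 : E)) b = w + ψ b • (((p.2 : E) - (p.1 : E)) - ((q.2 : E) - (q.1 : E))) := by
        rw [← hfb]
        simp only [f, smul_sub]
        abel
      have hψb : ‖ψ b • (((p.2 : E) - (p.1 : E)) - ((q.2 : E) - (q.1 : E)))‖ ≤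
          ‖((p.2 : E) - (p.1 : E)) - ((q.2 : E) - (q.1 : E))‖ := by
        rw [norm_smul, Real.norm_eq_abs, abs_of_nonneg (ψ_nonneg b)]
        exact mul_le_of_le_one_left (norm_nonneg _) (ψ_le_one b)
      have hcc : ‖((p.2 : E) - (p.1 : E)) - ((q.2 : E) - (q.1 : E))‖ ≤
          ‖(p.2 : E) - q.2‖ + ‖(p.1 : E) - q.1‖ := by
        have : ((p.2 : E) - (p.1 : E)) - ((q.2 : E) - (q.1 : E)) = ((p.2 : E) - q.2) - ((p.1 : E) - q.1) := by
          abel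
        rw [this]
        exact norm_sub_le _ _
      have h1 : ‖f ((p.2 : E) - (p.1 : E)) a - f ((p.2 : E) - (p.1 : E)) b‖ ≤
          ‖z - w‖ + (‖(p.2 : E) - q.2‖ + ‖(p.1 : E) - q.1‖) := by
        rw [hfa, e]
        calc ‖z - (w + ψ b • (((p.2 : E) - (p.1 : E)) - ((q.2 : E) - (q.1 : E))))‖
            ≤ ‖z - w‖ + ‖ψ b • (((p.2 : E) - (p.1 : E)) - ((q.2 : E) - (q.1 : E)))‖ := by
              rw [show z - (w + ψ b • (((p.2 : E) - (p.1 : E)) - ((q.2 : E) - (q.1 : E)))) =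
                (z - w) - ψ b • (((p.2 : E) - (p.1 : E)) - ((q.2 : E) - (q.1 : E))) by abel]
              exact norm_sub_le _ _
          _ ≤ ‖z - w‖ + (‖(p.2 : E) - q.2‖ + ‖(p.1 : E) - q.1‖) := by
              linarith [le_trans hψb hcc]
      set D := dist ((p, z) : ((closedBall (0 : E) 1) × (closedBall (0 : E) 1)) × E) (q, w)
      have hDq : D = max (dist p q) (dist z w) := Prod.dist_eq
      have hpq : dist p q = max (dist p.1 q.1) (dist p.2 q.2) := Prod.dist_eq
      have hD1 : dist z w ≤ D := by rw [hDq]; exact le_max_right _ _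
      have hD2 : dist (p.1 : E) (q.1 : E) ≤ D := by
        calc dist (p.1 : E) (q.1 : E) = dist p.1 q.1 := (Subtype.dist_eq _ _).symm
          _ ≤ dist p q := by rw [hpq]; exact le_max_left _ _
          _ ≤ D := by rw [hDq]; exact le_max_left _ _
      have hD3 : dist (p.2 : E) (q.2 : E) ≤ D := by
        calc dist (p.2 : E) (q.2 : E) = dist p.2 q.2 := (Subtype.dist_eq _ _).symm
          _ ≤ dist p q := by rw [hpq]; exact le_max_right _ _
          _ ≤ D := by rw [hDq]; exact le_max_left _ _
      rw [dist_eq_norm] at hD1 hD2 hD3 ⊢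
      have hDnn : (0:ℝ) ≤ D := dist_nonneg
      calc ‖a - b‖ ≤ 2 * (‖z - w‖ + (‖(p.2 : E) - q.2‖ + ‖(p.1 : E) - q.1‖)) := by
            refine le_trans key ?_
            linarith
        _ ≤ 6 * D := by linarith
    exact lip.continuous
  · -- compact support
    intro p
    refine ⟨closedBall (0 : E) 5, isCompact_closedBall _ _, ?_⟩
    intro z hz
    rw [mem_closedBall, dist_zero_right, not_le] at hz
    show z + ψ z • _ = z
    rw [ψ_eq_zero hz.le, zero_smul, add_zero]
  · -- χ p x = y
    intro p
    have h1 : ‖(p.1 : E)‖ ≤ 1 := by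
      have := p.1.2; rwa [mem_closedBall, dist_zero_right] at this
    show (p.1 : E) + ψ (p.1 : E) • ((p.2 : E) - (p.1 : E)) = (p.2 : E)
    rw [ψ_eq_one h1, one_smul]
    abel
  · -- χ (x,x) = refl
    intro x
    refine Homeomorph.ext fun z => ?_
    show z + ψ z • ((x : E) - (x : E)) = z
    simp
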